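/- Suppose the negated loss is (ν², α)-sub-Gamma under P_W ⊗ μ for some ν, α > 0, i.e. log ∫ exp(λ·(∫ ℓ d(P_W ⊗ μ) − ℓ)) d(P_W ⊗ μ) ≤ ν²λ²/(2(1 − αλ)) for every λ with 0 < λ < 1/α. Then gen ≤ (1/n) ∑_{i=1}^n ( √(2ν²·I(W;Z_i)) + α·I(W;Z_i) ). -/

import Mathlib

open MeasureTheory Real

/-- Real-valued Kullback–Leibler divergence `D(P‖Q)`,
the integral of the log-likelihood ratio with respect to `P`. -/
noncomputable def klReal {α : Type*} [MeasurableSpace α] (P Q : Measure α) : ℝ :=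
  ∫ x, llr P Q x ∂P

variable {W Z : Type*} [MeasurableSpace W] [MeasurableSpace Z]

/-- Population risk `L(w) = ∫ ℓ(w,z) dμ(z)`. -/
noncomputable def popRisk (μ : Measure Z) (ℓ : W × Z → ℝ) (w : W) : ℝ :=
  ∫ z, ℓ (w, z) ∂μ

/-- Empirical risk `L̂(w,s) = (1/n) ∑ i, ℓ(w, s i)`. -/
noncomputable def empRisk (n : ℕ) (ℓ : W × Z → ℝ) (w : W) (s : Fin n → Z) : ℝ :=
  (1 / (n : ℝ)) * ∑ i, ℓ (w, s i)

/-- Expected generalization error `gen = E_P[L(W) − L̂(W,S_n)]`. -/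
noncomputable def genErr (μ : Measure Z) (n : ℕ) (P : Measure (W × (Fin n → Z)))
    (ℓ : W × Z → ℝ) : ℝ :=
  ∫ p, (popRisk μ ℓ p.1 - empRisk n ℓ p.1 p.2) ∂P

/-- Expected empirical excess risk `R̂ = E_P[L̂(W,S_n) − L̂(w*,S_n)]`. -/
noncomputable def empExcess (n : ℕ) (P : Measure (W × (Fin n → Z)))
    (ℓ : W × Z → ℝ) (wstar : W) : ℝ :=
  ∫ p, (empRisk n ℓ p.1 p.2 - empRisk n ℓ wstar p.2) ∂P

/-- Expected excess risk `R = ∫ r d(P_W ⊗ μ)` where `r(w,z) = ℓ(w,z) − ℓ(w*,z)`. -/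
noncomputable def excessRisk (μ : Measure Z) {n : ℕ} (P : Measure (W × (Fin n → Z)))
    (ℓ : W × Z → ℝ) (wstar : W) : ℝ :=
  ∫ p, (ℓ p - ℓ (wstar, p.2)) ∂((P.map Prod.fst).prod μ)

/-- Joint law `P_i` of `(W, Z_i)`: the pushforward of `P` under `(w,z) ↦ (w, z_i)`. -/
noncomputable def jointLaw {n : ℕ} (P : Measure (W × (Fin n → Z))) (i : Fin n) :
    Measure (W × Z) :=
  P.map fun p => (p.1, p.2 i)

/-- Mutual information `I(W;Z_i) = D(P_i ‖ P_W ⊗ μ)`. -/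
noncomputable def mutInfo (μ : Measure Z) {n : ℕ} (P : Measure (W × (Fin n → Z)))
    (i : Fin n) : ℝ :=
  klReal (jointLaw P i) ((P.map Prod.fst).prod μ)

/-- Young-type pointwise inequality `a*b ≤ a log a − a + e^b` for `a ≥ 0`. -/
lemma mul_le_mul_log_sub_add_exp {a b : ℝ} (ha : 0 ≤ a) :
    a * b ≤ a * Real.log a - a + Real.exp b := by
  rcases eq_or_lt_of_le ha with h | h
  · simp [← h, (Real.exp_pos b).le]
  · have h1 := Real.add_one_le_exp (b - Real.log a)
    have h2 : Real.exp (b - Real.log a) = Real.exp b / a := by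
      rw [Real.exp_sub, Real.exp_log h]
    rw [h2] at h1
    have h3 : a * (b - Real.log a + 1) ≤ a * (Real.exp b / a) :=
      mul_le_mul_of_nonneg_left h1 ha
    have h4 : a * (Real.exp b / a) = Real.exp b := by field_simp
    nlinarith [h3]

/-- Donsker–Varadhan inequality. -/
lemma donsker_varadhan {Ω : Type*} [MeasurableSpace Ω] (P Q : Measure Ω)
    [IsProbabilityMeasure P] [IsProbabilityMeasure Q] (hPQ : P ≪ Q)
    (hllr : Integrable (llr P Q) P) (f : Ω → ℝ) (hfP : Integrable f P)
    (hexp : Integrable (fun x => Real.exp (f x)) Q) :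
    ∫ x, f x ∂P ≤ klReal P Q + Real.log (∫ x, Real.exp (f x) ∂Q) := by
  set c : ℝ := ∫ x, Real.exp (f x) ∂Q with hc
  have hc0 : 0 < c := integral_exp_pos hexp
  set ρ : Ω → ℝ := fun x => (P.rnDeriv Q x).toReal with hρ
  have hρ0 : ∀ x, 0 ≤ ρ x := fun x => ENNReal.toReal_nonneg
  -- integrabilities
  have h1 : Integrable (fun x => ρ x * (f x - Real.log c)) Q := by
    have := (MeasureTheory.integrable_rnDeriv_smul_iff (f := fun x => f x - Real.log c) hPQ).mpr
      (hfP.sub (integrable_const _))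
    simpa [smul_eq_mul] using this
  have h2 : Integrable (fun x => ρ x * Real.log (ρ x)) Q := by
    have := (MeasureTheory.integrable_rnDeriv_smul_iff (f := llr P Q) hPQ).mpr hllr
    simpa [smul_eq_mul, llr] using this
  have h3 : Integrable ρ Q := Measure.integrable_toReal_rnDeriv
  have h4 : Integrable (fun x => Real.exp (f x - Real.log c)) Q := by
    simpa [Real.exp_sub, div_eq_mul_inv] using hexp.mul_const (Real.exp (Real.log c))⁻¹
  -- pointwise inequality
  have hpt : ∀ x, ρ x * (f x - Real.log c) ≤
      ρ x * Real.log (ρ x) - ρ x + Real.exp (f x - Real.log c) :=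
    fun x => mul_le_mul_log_sub_add_exp (hρ0 x)
  have hg2 : Integrable (fun x => ρ x * Real.log (ρ x) - ρ x + Real.exp (f x - Real.log c)) Q :=
    (h2.sub h3).add h4
  have hmono := integral_mono h1 hg2 hpt
  -- compute left side
  have hL : ∫ x, ρ x * (f x - Real.log c) ∂Q = (∫ x, f x ∂P) - Real.log c := by
    have := MeasureTheory.integral_rnDeriv_smul (f := fun x => f x - Real.log c) hPQ
    simp only [smul_eq_mul] at this
    rw [this, integral_sub hfP (integrable_const _), integral_const]
    simp
  -- compute right side
  have hR1 : ∫ x, ρ x * Real.log (ρ x) ∂Q = klReal P Q := by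
    have := MeasureTheory.integral_rnDeriv_smul (f := llr P Q) hPQ
    simp only [smul_eq_mul] at this
    rw [klReal, ← this]
    rfl
  have hR2 : ∫ x, ρ x ∂Q = 1 := by
    rw [hρ, Measure.integral_toReal_rnDeriv hPQ]
    simp
  have hR3 : ∫ x, Real.exp (f x - Real.log c) ∂Q = 1 := by
    simp only [Real.exp_sub]
    rw [integral_div, ← hc, Real.exp_log hc0, div_self hc0.ne']
  have hRint : ∫ x, (ρ x * Real.log (ρ x) - ρ x + Real.exp (f x - Real.log c)) ∂Q
      = klReal P Q := by
    have hsub : Integrable (fun x => ρ x * Real.log (ρ x) - ρ x) Q := h2.sub h3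
    rw [integral_add hsub h4, integral_sub h2 h3, hR1, hR2, hR3]; ring
  rw [hL, hRint] at hmono
  linarith

/-- Nonnegativity of `klReal`. -/
lemma klReal_nonneg {Ω : Type*} [MeasurableSpace Ω] (P Q : Measure Ω)
    [IsProbabilityMeasure P] [IsProbabilityMeasure Q] (hPQ : P ≪ Q)
    (hllr : Integrable (llr P Q) P) : 0 ≤ klReal P Q := by
  have := donsker_varadhan P Q hPQ hllr (fun _ => 0) (integrable_const 0)
    (by simpa using (integrable_const 1 : Integrable (fun _ : Ω => (1:ℝ)) Q))
  simpa using this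

/-- Optimization step for sub-Gamma bounds. -/
lemma subGamma_opt {ν α I gap : ℝ} (hν : 0 < ν) (hα : 0 < α) (hI : 0 ≤ I)
    (h : ∀ lam : ℝ, 0 < lam → lam < 1 / α →
      lam * gap ≤ I + ν ^ 2 * lam ^ 2 / (2 * (1 - α * lam))) :
    gap ≤ Real.sqrt (2 * ν ^ 2 * I) + α * I := by
  rcases eq_or_lt_of_le hI with hI0 | hIpos
  · -- I = 0 : show gap ≤ 0
    have hgap : gap ≤ 0 := by
      by_contra hg
      push_neg at hg
      set lam : ℝ := min (gap / (2 * ν ^ 2)) (1 / (2 * α)) with hlam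
      have hlam0 : 0 < lam := lt_min (by positivity) (by positivity)
      have hlam1 : lam < 1 / α := lt_of_le_of_lt (min_le_right _ _) (by
        rw [div_lt_div_iff₀ (by positivity) hα]; nlinarith)
      have hkey := h lam hlam0 hlam1
      rw [← hI0] at hkey
      have hden : (1:ℝ)/2 ≤ 1 - α * lam := by
        have h5 : α * lam ≤ 1 / 2 := by
          calc α * lam ≤ α * (1 / (2 * α)) :=
                mul_le_mul_of_nonneg_left (min_le_right _ _) hα.le
            _ = 1 / 2 := by field_simp
        linarith
      have hb : ν ^ 2 * lam ^ 2 / (2 * (1 - α * lam)) ≤ ν ^ 2 * lam ^ 2 := by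
        rw [div_le_iff₀ (by linarith)]
        nlinarith [sq_nonneg (ν * lam)]
      have hs : lam ≤ gap / (2 * ν ^ 2) := min_le_left _ _
      have h6 : ν ^ 2 * lam ^ 2 ≤ lam * gap / 2 := by
        calc ν ^ 2 * lam ^ 2 = ν ^ 2 * lam * lam := by ring
          _ ≤ ν ^ 2 * lam * (gap / (2 * ν ^ 2)) :=
              mul_le_mul_of_nonneg_left hs (by positivity)
          _ = lam * gap / 2 := by field_simp
      have h7 : 0 < lam * gap := mul_pos hlam0 hg
      linarith
    have : 0 ≤ Real.sqrt (2 * ν ^ 2 * I) + α * I := by positivity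
    linarith
  · -- I > 0
    set s : ℝ := Real.sqrt (2 * I) with hsdef
    have hs0 : 0 < s := Real.sqrt_pos.mpr (by linarith)
    have hs2 : s ^ 2 = 2 * I := Real.sq_sqrt (by linarith)
    set D : ℝ := ν + α * s with hD
    have hD0 : 0 < D := by positivity
    set lam : ℝ := s / D with hlam
    have hlam0 : 0 < lam := div_pos hs0 hD0
    have hlam1 : lam < 1 / α := by
      rw [hlam, div_lt_div_iff₀ hD0 hα]
      nlinarith
    have hkey := h lam hlam0 hlam1
    have hden : 1 - α * lam = ν / D := by
      rw [hlam]; field_simp; ring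
    rw [hden] at hkey
    have hrhs : ν ^ 2 * lam ^ 2 / (2 * (ν / D)) = ν * s ^ 2 / (2 * D) := by
      rw [hlam]; field_simp
    rw [hrhs] at hkey
    -- hkey : (s/D) * gap ≤ I + ν * s^2 / (2*D)
    have h2 : s * gap ≤ I * D + ν * s ^ 2 / 2 := by
      have := mul_le_mul_of_nonneg_left hkey hD0.le
      rw [hlam] at this
      have hl : D * (s / D * gap) = s * gap := by field_simp
      have hr : D * (I + ν * s ^ 2 / (2 * D)) = I * D + ν * s ^ 2 / 2 := by
        field_simp
      rw [hl, hr] at this; exact this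
    have hsqrt : Real.sqrt (2 * ν ^ 2 * I) = ν * s := by
      rw [hsdef, show 2 * ν ^ 2 * I = ν ^ 2 * (2 * I) by ring,
        Real.sqrt_mul (sq_nonneg ν), Real.sqrt_sq hν.le]
    rw [hsqrt]
    -- from h2 : s * gap ≤ I*D + ν*s²/2 = s*(ν*s + α*I)
    have hexp : I * D + ν * s ^ 2 / 2 = s * (ν * s + α * I) := by
      rw [hD]; nlinarith [hs2]
    rw [hexp] at h2
    exact le_of_mul_le_mul_left (by linarith [h2]) hs0

theorem subGamma_loss_bound
    (μ : Measure Z) [IsProbabilityMeasure μ] (n : ℕ) (hn : 0 < n)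
    (P : Measure (W × (Fin n → Z))) [IsProbabilityMeasure P]
    (hmarg : P.map Prod.snd = Measure.pi fun _ : Fin n => μ)
    (ℓ : W × Z → ℝ) (hℓ : Measurable ℓ) (wstar : W)
    (hint : Integrable ℓ ((P.map Prod.fst).prod μ))
    (hinti : ∀ i : Fin n, Integrable ℓ (jointLaw P i))
    (hintw : Integrable (fun z => ℓ (wstar, z)) μ)
    (hac : ∀ i : Fin n, jointLaw P i ≪ (P.map Prod.fst).prod μ)
    (hIfin : ∀ i : Fin n, Integrable (llr (jointLaw P i) ((P.map Prod.fst).prod μ))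
      (jointLaw P i))
    (ν α : ℝ) (hν : 0 < ν) (hα : 0 < α)
    (hsubInt : ∀ lam : ℝ, 0 < lam → lam < 1 / α →
      Integrable
        (fun p => Real.exp (lam * ((∫ q, ℓ q ∂((P.map Prod.fst).prod μ)) - ℓ p)))
        ((P.map Prod.fst).prod μ))
    (hsub : ∀ lam : ℝ, 0 < lam → lam < 1 / α →
      Real.log (∫ p, Real.exp (lam * ((∫ q, ℓ q ∂((P.map Prod.fst).prod μ)) - ℓ p))
          ∂((P.map Prod.fst).prod μ)) ≤ ν ^ 2 * lam ^ 2 / (2 * (1 - α * lam))) :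
    genErr μ n P ℓ ≤
      (1 / (n : ℝ)) * ∑ i : Fin n,
        (Real.sqrt (2 * ν ^ 2 * mutInfo μ P i) + α * mutInfo μ P i) := by
  haveI : IsProbabilityMeasure (P.map (Prod.fst : W × (Fin n → Z) → W)) :=
    Measure.isProbabilityMeasure_map measurable_fst.aemeasurable
  have hφ : ∀ i : Fin n, Measurable fun p : W × (Fin n → Z) => (p.1, p.2 i) :=
    fun i => measurable_fst.prodMk ((measurable_pi_apply i).comp measurable_snd)
  have hPi : ∀ i : Fin n, IsProbabilityMeasure (jointLaw P i) := fun i => by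
    rw [jointLaw]; exact Measure.isProbabilityMeasure_map (hφ i).aemeasurable
  set Q : Measure (W × Z) := (P.map Prod.fst).prod μ with hQ
  set m : ℝ := ∫ q, ℓ q ∂Q with hm
  -- per-index bound via Donsker–Varadhan + sub-Gamma optimization
  have key : ∀ i : Fin n,
      m - ∫ q, ℓ q ∂(jointLaw P i) ≤
        Real.sqrt (2 * ν ^ 2 * mutInfo μ P i) + α * mutInfo μ P i := by
    intro i
    haveI := hPi i
    have hI0 : 0 ≤ mutInfo μ P i := klReal_nonneg _ _ (hac i) (hIfin i)
    refine subGamma_opt hν hα hI0 fun lam hl0 hl1 => ?_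
    have hfP : Integrable (fun q : W × Z => lam * (m - ℓ q)) (jointLaw P i) :=
      ((integrable_const m).sub (hinti i)).const_mul lam
    have hdv := donsker_varadhan (jointLaw P i) Q (hac i) (hIfin i)
      (fun q => lam * (m - ℓ q)) hfP (hsubInt lam hl0 hl1)
    have hInt : ∫ q, lam * (m - ℓ q) ∂(jointLaw P i)
        = lam * (m - ∫ q, ℓ q ∂(jointLaw P i)) := by
      rw [integral_const_mul, integral_sub (integrable_const m) (hinti i), integral_const]
      simp
    rw [hInt] at hdv
    have hs := hsub lam hl0 hl1
    have : klReal (jointLaw P i) Q = mutInfo μ P i := rfl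
    linarith
  -- integrability pieces
  have hterm : ∀ i : Fin n, Integrable (fun p : W × (Fin n → Z) => ℓ (p.1, p.2 i)) P := by
    intro i
    have h := hinti i
    rw [jointLaw] at h
    exact (integrable_map_measure hℓ.aestronglyMeasurable (hφ i).aemeasurable).mp h
  have hpop1 : Integrable (fun w => ∫ z, ℓ (w, z) ∂μ) (P.map Prod.fst) :=
    hint.integral_prod_left
  have hpopInt : Integrable (fun p : W × (Fin n → Z) => popRisk μ ℓ p.1) P := by
    have := (integrable_map_measure hpop1.aestronglyMeasurable
      measurable_fst.aemeasurable).mp hpop1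
    exact this
  have hempInt : Integrable (fun p : W × (Fin n → Z) => empRisk n ℓ p.1 p.2) P := by
    simp only [empRisk]
    exact (integrable_finset_sum _ (fun i _ => hterm i)).const_mul _
  -- compute genErr
  have hA : ∫ p, popRisk μ ℓ p.1 ∂P = m := by
    have e1 : ∫ p, popRisk μ ℓ p.1 ∂P = ∫ w, popRisk μ ℓ w ∂(P.map Prod.fst) :=
      (integral_map measurable_fst.aemeasurable
        (by exact hpop1.aestronglyMeasurable)).symm
    rw [e1, hm, hQ, MeasureTheory.integral_prod _ hint]
    simp [popRisk]
  have hB : ∫ p, empRisk n ℓ p.1 p.2 ∂P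
      = (1 / (n : ℝ)) * ∑ i : Fin n, ∫ q, ℓ q ∂(jointLaw P i) := by
    simp only [empRisk]
    rw [integral_const_mul, integral_finset_sum _ (fun i _ => hterm i)]
    congr 1
    refine Finset.sum_congr rfl fun i _ => ?_
    rw [jointLaw, integral_map (hφ i).aemeasurable hℓ.aestronglyMeasurable]
  have hgen : genErr μ n P ℓ
      = (1 / (n : ℝ)) * ∑ i : Fin n, (m - ∫ q, ℓ q ∂(jointLaw P i)) := by
    rw [genErr, integral_sub hpopInt hempInt, hA, hB, Finset.sum_sub_distrib,
      Finset.sum_const, Finset.card_univ, Fintype.card_fin]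
    have hn' : (n : ℝ) ≠ 0 := Nat.cast_ne_zero.mpr hn.ne'
    field_simp
    ring
  rw [hgen]
  exact mul_le_mul_of_nonneg_left (Finset.sum_le_sum fun i _ => key i) (by positivity)
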